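/- Let W be an N×N gossip matrix (row-stochastic, nonnegative entries, positive diagonal, strongly connected). Then the limit of the matrix powers lim_{k→∞} W^k exists, i.e., there is an N×N matrix W^∞ such that W^k converges to W^∞ entrywise as k → ∞. -/

import Mathlib

open Filter Topology

/-- An `N × N` real matrix is row-stochastic if all its entries are nonnegative and
every row sums to one. -/
def RowStochastic {N : ℕ} (W : Matrix (Fin N) (Fin N) ℝ) : Prop :=
  (∀ i j, 0 ≤ W i j) ∧ ∀ i, ∑ j, W i j = 1

/-- The directed graph of `W` has an edge from node `m` to node `n` iff `W n m > 0`.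
`W` is strongly connected if every node can reach every other node through directed edges. -/
def StronglyConnected {N : ℕ} (W : Matrix (Fin N) (Fin N) ℝ) : Prop :=
  ∀ m n : Fin N, Relation.ReflTransGen (fun a b => 0 < W b a) m n

/-- A gossip matrix: row-stochastic, strongly connected, with positive diagonal entries. -/
def IsGossipMatrix {N : ℕ} (W : Matrix (Fin N) (Fin N) ℝ) : Prop :=
  RowStochastic W ∧ StronglyConnected W ∧ ∀ i, 0 < W i i

section Auxiliary

variable {N : ℕ} {W : Matrix (Fin N) (Fin N) ℝ}

/-- Powers of a row-stochastic matrix are row-stochastic. -/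
lemma RowStochastic.pow (h : RowStochastic W) (k : ℕ) : RowStochastic (W ^ k) := by
  induction k with
  | zero =>
    refine ⟨fun i j => ?_, fun i => ?_⟩
    · rw [pow_zero, Matrix.one_apply]
      split <;> norm_num
    · simp [pow_zero, Matrix.one_apply]
  | succ k ih =>
    refine ⟨fun i j => ?_, fun i => ?_⟩
    · rw [pow_succ', Matrix.mul_apply]
      exact Finset.sum_nonneg fun l _ => mul_nonneg (h.1 i l) (ih.1 l j)
    · simp only [pow_succ', Matrix.mul_apply]
      rw [Finset.sum_comm]
      have : ∀ l, ∑ j, W i l * (W ^ k) l j = W i l := by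
        intro l
        rw [← Finset.mul_sum, ih.2 l, mul_one]
      simp_rw [this]
      exact h.2 i

lemma pow_entry_pos_step (h : RowStochastic W) (hd : ∀ i, 0 < W i i)
    {k : ℕ} {i j : Fin N} (hk : 0 < (W ^ k) i j) : 0 < (W ^ (k + 1)) i j := by
  rw [pow_succ', Matrix.mul_apply]
  exact Finset.sum_pos' (fun l _ => mul_nonneg (h.1 i l) ((h.pow k).1 l j))
    ⟨i, Finset.mem_univ i, mul_pos (hd i) hk⟩

lemma pow_entry_pos_mono (h : RowStochastic W) (hd : ∀ i, 0 < W i i)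
    {k k' : ℕ} (hle : k ≤ k') {i j : Fin N} (hk : 0 < (W ^ k) i j) :
    0 < (W ^ k') i j := by
  induction hle with
  | refl => exact hk
  | step _ ih => exact pow_entry_pos_step h hd ih

lemma exists_pow_entry_pos (h : RowStochastic W) (hsc : StronglyConnected W)
    (i j : Fin N) : ∃ k, 0 < (W ^ k) j i := by
  have hrel := hsc i j
  induction hrel with
  | refl => exact ⟨0, by simp [Matrix.one_apply]⟩
  | tail _ hedge ih =>
    obtain ⟨k, hk⟩ := ih
    rename_i b c _
    refine ⟨k + 1, ?_⟩
    rw [pow_succ', Matrix.mul_apply]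
    exact Finset.sum_pos' (fun l _ => mul_nonneg (h.1 c l) ((h.pow k).1 l i))
      ⟨b, Finset.mem_univ b, mul_pos hedge hk⟩

lemma exists_pow_all_pos (h : RowStochastic W) (hsc : StronglyConnected W)
    (hd : ∀ i, 0 < W i i) : ∃ p, 1 ≤ p ∧ ∀ i j, 0 < (W ^ p) i j := by
  have key : ∀ q : Fin N × Fin N, ∃ k, 0 < (W ^ k) q.1 q.2 := fun q =>
    exists_pow_entry_pos h hsc q.2 q.1
  choose K hK using key
  refine ⟨(Finset.univ.sup K) + 1, le_add_self, fun i j => ?_⟩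
  exact pow_entry_pos_mono h hd
    (le_trans (Finset.le_sup (Finset.mem_univ (i, j))) (Nat.le_succ _)) (hK (i, j))

/-- A stochastic average is at most the sup. -/
lemma avg_le_sup (hne : (Finset.univ : Finset (Fin N)).Nonempty) (P : Matrix (Fin N) (Fin N) ℝ)
    (h0 : ∀ i j, 0 ≤ P i j) (h1 : ∀ i, ∑ j, P i j = 1)
    (x : Fin N → ℝ) (i : Fin N) :
    ∑ l, P i l * x l ≤ Finset.univ.sup' hne x := by
  calc ∑ l, P i l * x l ≤ ∑ l, P i l * Finset.univ.sup' hne x :=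
        Finset.sum_le_sum fun l _ =>
          mul_le_mul_of_nonneg_left (Finset.le_sup' x (Finset.mem_univ l)) (h0 i l)
    _ = (∑ l, P i l) * Finset.univ.sup' hne x := by rw [Finset.sum_mul]
    _ = _ := by rw [h1 i, one_mul]

/-- A stochastic average is at least the inf. -/
lemma inf_le_avg (hne : (Finset.univ : Finset (Fin N)).Nonempty) (P : Matrix (Fin N) (Fin N) ℝ)
    (h0 : ∀ i j, 0 ≤ P i j) (h1 : ∀ i, ∑ j, P i j = 1)
    (x : Fin N → ℝ) (i : Fin N) :
    Finset.univ.inf' hne x ≤ ∑ l, P i l * x l := by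
  calc Finset.univ.inf' hne x = (∑ l, P i l) * Finset.univ.inf' hne x := by
        rw [h1 i, one_mul]
    _ = ∑ l, P i l * Finset.univ.inf' hne x := by rw [Finset.sum_mul]
    _ ≤ ∑ l, P i l * x l :=
        Finset.sum_le_sum fun l _ =>
          mul_le_mul_of_nonneg_left (Finset.inf'_le x (Finset.mem_univ l)) (h0 i l)

/-- If all weights are at least `ε`, the average is pulled down from the sup. -/
lemma avg_le_sup_sub (hne : (Finset.univ : Finset (Fin N)).Nonempty) (P : Matrix (Fin N) (Fin N) ℝ)
    (h0 : ∀ i j, 0 ≤ P i j) (h1 : ∀ i, ∑ j, P i j = 1)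
    (ε : ℝ) (hε : ∀ i j, ε ≤ P i j)
    (x : Fin N → ℝ) (i : Fin N) :
    ∑ l, P i l * x l ≤
      Finset.univ.sup' hne x - ε * (Finset.univ.sup' hne x - Finset.univ.inf' hne x) := by
  set S := Finset.univ.sup' hne x with hS
  set I := Finset.univ.inf' hne x with hI
  have hSI : 0 ≤ S - I := by
    obtain ⟨i0, _, _⟩ := Finset.exists_mem_eq_inf' hne x
    have h2 : I ≤ S := by
      rw [hI, hS]
      exact le_trans (Finset.inf'_le x (Finset.mem_univ i0))
        (Finset.le_sup' x (Finset.mem_univ i0))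
    linarith
  obtain ⟨l0, _, hl0⟩ := Finset.exists_mem_eq_inf' hne x
  have hsplit : ∑ l, P i l * x l
      = P i l0 * x l0 + ∑ l ∈ Finset.univ.erase l0, P i l * x l :=
    (Finset.add_sum_erase _ _ (Finset.mem_univ l0)).symm
  have hsplitP : P i l0 + ∑ l ∈ Finset.univ.erase l0, P i l = 1 := by
    rw [Finset.add_sum_erase _ _ (Finset.mem_univ l0)]; exact h1 i
  have hbound : ∑ l ∈ Finset.univ.erase l0, P i l * x l
      ≤ (1 - P i l0) * S := by
    calc ∑ l ∈ Finset.univ.erase l0, P i l * x l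
        ≤ ∑ l ∈ Finset.univ.erase l0, P i l * S :=
          Finset.sum_le_sum fun l _ =>
            mul_le_mul_of_nonneg_left (Finset.le_sup' x (Finset.mem_univ l)) (h0 i l)
      _ = (∑ l ∈ Finset.univ.erase l0, P i l) * S := by rw [Finset.sum_mul]
      _ = (1 - P i l0) * S := by rw [← hsplitP]; ring_nf
  have hxl0 : x l0 = I := hl0.symm
  have key : ∑ l, P i l * x l ≤ S - P i l0 * (S - I) := by
    rw [hsplit, hxl0]
    have : P i l0 * I + (1 - P i l0) * S = S - P i l0 * (S - I) := by ring
    linarith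
  have : ε * (S - I) ≤ P i l0 * (S - I) :=
    mul_le_mul_of_nonneg_right (hε i l0) hSI
  linarith

/-- If all weights are at least `ε`, the average is pulled up from the inf. -/
lemma inf_add_le_avg (hne : (Finset.univ : Finset (Fin N)).Nonempty) (P : Matrix (Fin N) (Fin N) ℝ)
    (h0 : ∀ i j, 0 ≤ P i j) (h1 : ∀ i, ∑ j, P i j = 1)
    (ε : ℝ) (hε : ∀ i j, ε ≤ P i j)
    (x : Fin N → ℝ) (i : Fin N) :
    Finset.univ.inf' hne x + ε * (Finset.univ.sup' hne x - Finset.univ.inf' hne x)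
      ≤ ∑ l, P i l * x l := by
  set S := Finset.univ.sup' hne x with hS
  set I := Finset.univ.inf' hne x with hI
  have hSI : 0 ≤ S - I := by
    obtain ⟨i0, _, _⟩ := Finset.exists_mem_eq_inf' hne x
    have h2 : I ≤ S := by
      rw [hI, hS]
      exact le_trans (Finset.inf'_le x (Finset.mem_univ i0))
        (Finset.le_sup' x (Finset.mem_univ i0))
    linarith
  obtain ⟨l1, _, hl1⟩ := Finset.exists_mem_eq_sup' hne x
  have hsplit : ∑ l, P i l * x l
      = P i l1 * x l1 + ∑ l ∈ Finset.univ.erase l1, P i l * x l :=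
    (Finset.add_sum_erase _ _ (Finset.mem_univ l1)).symm
  have hsplitP : P i l1 + ∑ l ∈ Finset.univ.erase l1, P i l = 1 := by
    rw [Finset.add_sum_erase _ _ (Finset.mem_univ l1)]; exact h1 i
  have hbound : (1 - P i l1) * I ≤ ∑ l ∈ Finset.univ.erase l1, P i l * x l := by
    calc (1 - P i l1) * I = (∑ l ∈ Finset.univ.erase l1, P i l) * I := by
          rw [← hsplitP]; ring_nf
      _ = ∑ l ∈ Finset.univ.erase l1, P i l * I := by rw [Finset.sum_mul]
      _ ≤ ∑ l ∈ Finset.univ.erase l1, P i l * x l :=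
          Finset.sum_le_sum fun l _ =>
            mul_le_mul_of_nonneg_left (Finset.inf'_le x (Finset.mem_univ l)) (h0 i l)
  have hxl1 : x l1 = S := hl1.symm
  have key : I + P i l1 * (S - I) ≤ ∑ l, P i l * x l := by
    rw [hsplit, hxl1]
    have : P i l1 * S + (1 - P i l1) * I = I + P i l1 * (S - I) := by ring
    linarith
  have : ε * (S - I) ≤ P i l1 * (S - I) :=
    mul_le_mul_of_nonneg_right (hε i l1) hSI
  linarith

/-- Each entry of `W ^ k` converges as `k → ∞`. -/
lemma gossip_entry_tendsto (hne : (Finset.univ : Finset (Fin N)).Nonempty)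
    (h : RowStochastic W)
    (p : ℕ) (hp1 : 1 ≤ p) (hposP : ∀ i j, 0 < (W ^ p) i j)
    (i j : Fin N) :
    ∃ L : ℝ, Tendsto (fun k => (W ^ k) i j) atTop (𝓝 L) := by
  have hrs : ∀ k, RowStochastic (W ^ k) := h.pow
  set g : ℕ → Fin N → ℝ := fun k i => (W ^ k) i j with hg
  set M : ℕ → ℝ := fun k => Finset.univ.sup' hne (g k) with hM
  set m : ℕ → ℝ := fun k => Finset.univ.inf' hne (g k) with hm
  have hrec : ∀ q k i, g (q + k) i = ∑ l, (W ^ q) i l * g k l := by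
    intro q k i
    simp only [hg, pow_add, Matrix.mul_apply]
  have hManti : Antitone M := by
    apply antitone_nat_of_succ_le
    intro k
    apply Finset.sup'_le
    intro i _
    have := hrec 1 k i
    rw [show (1:ℕ) + k = k + 1 by ring] at this
    rw [show g (k+1) i = ∑ l, (W ^ 1) i l * g k l from this]
    exact avg_le_sup hne _ (hrs 1).1 (hrs 1).2 (g k) i
  have hmmono : Monotone m := by
    apply monotone_nat_of_le_succ
    intro k
    apply Finset.le_inf'
    intro i _
    have := hrec 1 k i
    rw [show (1:ℕ) + k = k + 1 by ring] at this
    rw [show g (k+1) i = ∑ l, (W ^ 1) i l * g k l from this]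
    exact inf_le_avg hne _ (hrs 1).1 (hrs 1).2 (g k) i
  have hmleM : ∀ k, m k ≤ M k := by
    intro k
    obtain ⟨i0, _, _⟩ := Finset.exists_mem_eq_inf' hne (g k)
    exact le_trans (Finset.inf'_le (g k) (Finset.mem_univ i0))
      (Finset.le_sup' (g k) (Finset.mem_univ i0))
  have hMbdd : BddBelow (Set.range M) := by
    refine ⟨m 0, ?_⟩
    rintro _ ⟨k, rfl⟩
    exact le_trans (hmmono (Nat.zero_le k)) (hmleM k)
  have hmbdd : BddAbove (Set.range m) := by
    refine ⟨M 0, ?_⟩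
    rintro _ ⟨k, rfl⟩
    exact le_trans (hmleM k) (hManti (Nat.zero_le k))
  have hMt : Tendsto M atTop (𝓝 (⨅ k, M k)) := tendsto_atTop_ciInf hManti hMbdd
  have hmt : Tendsto m atTop (𝓝 (⨆ k, m k)) := tendsto_atTop_ciSup hmmono hmbdd
  set A := ⨅ k, M k with hA
  set B := ⨆ k, m k with hB
  obtain ⟨iw, _⟩ := id hne
  have hne2 : (Finset.univ : Finset (Fin N × Fin N)).Nonempty :=
    ⟨(iw, iw), Finset.mem_univ _⟩
  set ε : ℝ := Finset.univ.inf' hne2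
    (fun q : Fin N × Fin N => (W ^ p) q.1 q.2) with hε
  have hεpos : 0 < ε := by
    rw [hε]
    exact (Finset.lt_inf'_iff hne2).mpr fun q _ => hposP q.1 q.2
  have hεle : ∀ i l, ε ≤ (W ^ p) i l := by
    intro i l
    exact Finset.inf'_le _ (Finset.mem_univ (i, l))
  have hεle1 : ε ≤ 1 := by
    calc ε ≤ (W ^ p) iw iw := hεle iw iw
      _ ≤ ∑ l, (W ^ p) iw l :=
        Finset.single_le_sum (fun l _ => (hrs p).1 iw l) (Finset.mem_univ iw)
      _ = 1 := (hrs p).2 iw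
  have hcontr : ∀ k, M (p + k) - m (p + k) ≤ (1 - ε) * (M k - m k) := by
    intro k
    have hub : M (p + k) ≤ M k - ε * (M k - m k) := by
      apply Finset.sup'_le
      intro i _
      rw [show g (p+k) i = ∑ l, (W ^ p) i l * g k l from hrec p k i]
      exact avg_le_sup_sub hne _ (hrs p).1 (hrs p).2 ε hεle (g k) i
    have hlb : m k + ε * (M k - m k) ≤ m (p + k) := by
      apply Finset.le_inf'
      intro i _
      rw [show g (p+k) i = ∑ l, (W ^ p) i l * g k l from hrec p k i]
      exact inf_add_le_avg hne _ (hrs p).1 (hrs p).2 ε hεle (g k) i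
    have hd : 0 ≤ M k - m k := by linarith [hmleM k]
    nlinarith [mul_nonneg hεpos.le hd]
  have hiter : ∀ n, M (p * n) - m (p * n) ≤ (1 - ε) ^ n * (M 0 - m 0) := by
    intro n
    induction n with
    | zero => simp
    | succ n ih =>
      have h1 : p * (n + 1) = p + p * n := by ring
      rw [h1]
      calc M (p + p * n) - m (p + p * n) ≤ (1 - ε) * (M (p * n) - m (p * n)) :=
            hcontr (p * n)
        _ ≤ (1 - ε) * ((1 - ε) ^ n * (M 0 - m 0)) :=
            mul_le_mul_of_nonneg_left ih (by linarith)
        _ = (1 - ε) ^ (n + 1) * (M 0 - m 0) := by ring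
  have hsub : Tendsto (fun n => M (p * n) - m (p * n)) atTop (𝓝 (A - B)) := by
    have hpn : Tendsto (fun n => p * n) atTop atTop :=
      tendsto_atTop_mono (fun n => Nat.le_mul_of_pos_left n hp1) tendsto_id
    exact (hMt.sub hmt).comp hpn
  have hzero : Tendsto (fun n : ℕ => (1 - ε) ^ n * (M 0 - m 0)) atTop (𝓝 0) := by
    have : Tendsto (fun n : ℕ => (1 - ε) ^ n) atTop (𝓝 0) :=
      tendsto_pow_atTop_nhds_zero_of_lt_one (by linarith) (by linarith)
    simpa using this.mul_const (M 0 - m 0)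
  have hAB1 : A - B ≤ 0 := le_of_tendsto_of_tendsto' hsub hzero hiter
  have hAB2 : 0 ≤ A - B := by
    apply ge_of_tendsto' hsub
    intro n
    linarith [hmleM (p * n)]
  have hABeq : A = B := by linarith
  refine ⟨A, ?_⟩
  apply tendsto_of_tendsto_of_tendsto_of_le_of_le (hABeq ▸ hmt) hMt
  · intro k
    exact Finset.inf'_le (g k) (Finset.mem_univ i)
  · intro k
    exact Finset.le_sup' (g k) (Finset.mem_univ i)

end Auxiliary

/-- for a gossip matrix `W`, the powers `W^k` converge entrywise to some
matrix `W^∞`. -/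
theorem gossip_powers_converge {N : ℕ} (W : Matrix (Fin N) (Fin N) ℝ)
    (hW : IsGossipMatrix W) :
    ∃ Winf : Matrix (Fin N) (Fin N) ℝ,
      Tendsto (fun k : ℕ => W ^ k) atTop (𝓝 Winf) := by
  obtain ⟨hrs, hsc, hd⟩ := hW
  rcases Nat.eq_zero_or_pos N with hN | hN
  · subst hN
    refine ⟨1, ?_⟩
    have : (fun k : ℕ => W ^ k) = fun _ => (1 : Matrix (Fin 0) (Fin 0) ℝ) := by
      funext k
      ext i j
      exact i.elim0
    rw [this]
    exact tendsto_const_nhds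
  · have hne : (Finset.univ : Finset (Fin N)).Nonempty :=
      ⟨⟨0, hN⟩, Finset.mem_univ _⟩
    obtain ⟨p, hp1, hposP⟩ := exists_pow_all_pos hrs hsc hd
    have key : ∀ i j, ∃ L : ℝ, Tendsto (fun k => (W ^ k) i j) atTop (𝓝 L) :=
      fun i j => gossip_entry_tendsto hne hrs p hp1 hposP i j
    choose L hL using key
    refine ⟨Matrix.of L, ?_⟩
    refine (tendsto_pi_nhds (A := fun _ : Fin N => Fin N → ℝ)).mpr ?_
    intro i
    rw [tendsto_pi_nhds]
    intro j
    exact hL i j
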